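/- Let m, l, r be positive integers and 0 < ε < 1, 0 < δ < 1 with l ≥ δ⁻¹·(r² + r)/(2ε − ε²)². Let the random l × m sparse embedding matrix S be generated as follows: choose h : {1,…,m} → {1,…,l} uniformly at random (each h(i) independent and uniform on {1,…,l}) and independent uniform random signs σ₁,…,σ_m ∈ {−1,+1}; set S_{h(i),i} = σ_i for each i and all other entries 0. Then for every fixed m × r real matrix U with orthonormal columns (UᵀU = I_r), with probability at least 1 − δ, every singular value of S·U lies in the interval [1 − ε, 1 + ε]; equivalently, with probability at least 1 − δ, for every x ∈ ℝʳ one has (1 − ε)·‖x‖₂ ≤ ‖S·U·x‖₂ ≤ (1 + ε)·‖x‖₂. -/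

import Mathlib

open Matrix

/-- The random `l × m` sparse embedding matrix determined by a hash function
`h : Fin m → Fin l` and signs `s : Fin m → Bool` (where `true ↦ +1`, `false ↦ -1`):
its `(h j, j)` entry is the sign `s j` and all other entries are `0`. -/
def semOf {l m : ℕ} (h : Fin m → Fin l) (s : Fin m → Bool) :
    Matrix (Fin l) (Fin m) ℝ :=
  Matrix.of fun i j => if h j = i then (if s j then 1 else -1) else 0


open scoped ENNReal

noncomputable def sgR (b : Bool) : ℝ := if b then 1 else -1

lemma sgR_sq (b : Bool) : sgR b * sgR b = 1 := by cases b <;> simp [sgR]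

lemma sum_fn_prod {ι κ : Type*} [Fintype ι] [Fintype κ] [DecidableEq ι] (f : ι → κ → ℝ) :
    ∑ g : ι → κ, ∏ i, f i (g i) = ∏ i, ∑ x, f i x := by
  rw [Finset.prod_univ_sum, Fintype.piFinset_univ]

lemma prod_pow_ind {m : ℕ} (a : Fin m) (y : Fin m → ℝ) :
    ∏ j, y j ^ (if a = j then 1 else 0) = y a := by
  have : ∀ j, y j ^ (if a = j then 1 else 0) = if a = j then y j else 1 := by
    intro j; split <;> simp
  simp only [this, Finset.prod_ite_eq, Finset.mem_univ, if_pos]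

lemma sgnQuadSum {m : ℕ} (a b c d : Fin m) (hab : a ≠ b) (hcd : c ≠ d) :
    ∑ s : Fin m → Bool, sgR (s a) * sgR (s b) * (sgR (s c) * sgR (s d)) =
      if (a = c ∧ b = d) ∨ (a = d ∧ b = c) then (2:ℝ)^m else 0 := by
  classical
  set e : Fin m → ℕ := fun j => (if a = j then 1 else 0) + (if b = j then 1 else 0)
      + (if c = j then 1 else 0) + (if d = j then 1 else 0) with he
  have hterm : ∀ s : Fin m → Bool,
      sgR (s a) * sgR (s b) * (sgR (s c) * sgR (s d)) = ∏ j, sgR (s j) ^ e j := by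
    intro s
    simp only [he, pow_add, Finset.prod_mul_distrib, prod_pow_ind]
    ring
  simp only [hterm]
  rw [sum_fn_prod (fun j b => sgR b ^ e j)]
  have hfac : ∀ j, (∑ x : Bool, sgR x ^ e j) = if Even (e j) then 2 else 0 := by
    intro j
    rw [Fintype.sum_bool]
    have h1 : sgR true = 1 := rfl
    have h2 : sgR false = -1 := rfl
    rw [h1, h2, one_pow]
    by_cases h : Even (e j)
    · rw [if_pos h, h.neg_one_pow]; norm_num
    · rw [if_neg h, (Nat.not_even_iff_odd.1 h).neg_one_pow]; norm_num
  simp only [hfac]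
  split
  · rename_i hmatch
    have heven : ∀ j, Even (e j) := by
      intro j
      rcases hmatch with ⟨h1, h2⟩ | ⟨h1, h2⟩ <;> subst h1 <;> subst h2 <;>
        · simp only [he]; rcases Decidable.em (a = j) with h | h <;>
            rcases Decidable.em (b = j) with h' | h' <;> simp [h, h'] <;> omega
    have : ∀ j ∈ Finset.univ, (if Even (e j) then (2:ℝ) else 0) = 2 := by
      intro j _; rw [if_pos (heven j)]
    rw [Finset.prod_congr rfl this, Finset.prod_const, Finset.card_univ, Fintype.card_fin]
  · rename_i hmatch
    push_neg at hmatch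
    obtain ⟨j0, hj0⟩ : ∃ j0, e j0 = 1 := by
      by_cases hac : a = c
      · have hbd : b ≠ d := fun h => (hmatch.1 hac) h
        refine ⟨b, ?_⟩
        have h1 : ¬ a = b := hab
        have h2 : ¬ c = b := fun h => hab (hac.trans h)
        have h3 : ¬ d = b := fun h => hbd h.symm
        simp [he, h1, h2, h3]
      · by_cases had : a = d
        · have hbc : b ≠ c := fun h => (hmatch.2 had) h
          refine ⟨b, ?_⟩
          have h1 : ¬ a = b := hab
          have h2 : ¬ c = b := fun h => hbc h.symm
          have h3 : ¬ d = b := fun h => hab (had.trans h)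
          simp [he, h1, h2, h3]
        · refine ⟨a, ?_⟩
          have h1 : ¬ b = a := fun h => hab h.symm
          have h2 : ¬ c = a := fun h => hac h.symm
          have h3 : ¬ d = a := fun h => had h.symm
          simp [he, h1, h2, h3]
    refine Finset.prod_eq_zero (Finset.mem_univ j0) ?_
    rw [hj0]; norm_num

lemma hash_sum {m l : ℕ} (hl : 0 < l) {p1 p2 : Fin m} (hp : p1 ≠ p2) :
    ∑ h : Fin m → Fin l, (if h p1 = h p2 then (1:ℝ) else 0) = (l:ℝ)^(m-1) := by
  classical
  have hm2 : 2 ≤ m := by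
    have : Nontrivial (Fin m) := ⟨p1, p2, hp⟩
    have := Fintype.one_lt_card (α := Fin m)
    exact (by simpa using this : 1 < m)
  have key : ∀ h : Fin m → Fin l, (if h p1 = h p2 then (1:ℝ) else 0)
      = ∑ i : Fin l, (if h p1 = i then (1:ℝ) else 0) * (if h p2 = i then 1 else 0) := by
    intro h
    rw [Finset.sum_eq_single (h p1)]
    · simp [eq_comm]
    · intro i _ hi
      rw [if_neg (fun hh => hi hh.symm), zero_mul]
    · intro hmem; exact absurd (Finset.mem_univ _) hmem
  simp only [key]
  rw [Finset.sum_comm]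
  set f : Fin l → Fin m → Fin l → ℝ := fun i j x =>
    if j = p1 then (if x = i then 1 else 0) else if j = p2 then (if x = i then 1 else 0) else 1
    with hf
  have hterm : ∀ (i : Fin l) (h : Fin m → Fin l),
      (if h p1 = i then (1:ℝ) else 0) * (if h p2 = i then 1 else 0) = ∏ j, f i j (h j) := by
    intro i h
    rw [← Finset.mul_prod_erase Finset.univ _ (Finset.mem_univ p1),
        ← Finset.mul_prod_erase _ _ (Finset.mem_erase.2 ⟨hp.symm, Finset.mem_univ p2⟩),
        Finset.prod_eq_one, mul_one]
    · simp only [hf, if_pos rfl, if_neg hp.symm, if_true, eq_self_iff_true]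
    · intro j hj
      rw [Finset.mem_erase, Finset.mem_erase] at hj
      simp only [hf, if_neg hj.2.1, if_neg hj.1]
  have hinner : ∀ i : Fin l,
      (∑ h : Fin m → Fin l, (if h p1 = i then (1:ℝ) else 0) * (if h p2 = i then 1 else 0))
        = (l:ℝ)^(m-2) := by
    intro i
    simp only [hterm i]
    rw [sum_fn_prod (f i)]
    rw [← Finset.mul_prod_erase Finset.univ _ (Finset.mem_univ p1),
        ← Finset.mul_prod_erase _ _ (Finset.mem_erase.2 ⟨hp.symm, Finset.mem_univ p2⟩)]
    have e1 : (∑ x : Fin l, f i p1 x) = 1 := by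
      simp only [hf, if_pos rfl]
      rw [Finset.sum_ite_eq' Finset.univ i (fun _ => (1:ℝ))]
      simp
    have e2 : (∑ x : Fin l, f i p2 x) = 1 := by
      simp only [hf, if_neg hp.symm, if_pos rfl, if_true, eq_self_iff_true]
      rw [Finset.sum_ite_eq' Finset.univ i (fun _ => (1:ℝ))]
      simp
    have e3 : ∀ j ∈ (Finset.univ.erase p1).erase p2, (∑ x : Fin l, f i j x) = (l:ℝ) := by
      intro j hj
      rw [Finset.mem_erase, Finset.mem_erase] at hj
      simp only [hf, if_neg hj.2.1, if_neg hj.1]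
      simp
    rw [e1, e2, Finset.prod_congr rfl e3, Finset.prod_const, one_mul, one_mul]
    congr 1
    rw [Finset.card_erase_of_mem (Finset.mem_erase.2 ⟨hp.symm, Finset.mem_univ p2⟩),
        Finset.card_erase_of_mem (Finset.mem_univ p1), Finset.card_univ, Fintype.card_fin]
    omega
  simp only [hinner]
  rw [Finset.sum_const, Finset.card_univ, Fintype.card_fin, nsmul_eq_mul]
  rw [← pow_succ']
  congr 1
  omega

lemma semOf_apply {l m : ℕ} (h : Fin m → Fin l) (s : Fin m → Bool) (i j) :
    semOf h s i j = if h j = i then sgR (s j) else 0 := rfl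

noncomputable def Epair {m l : ℕ} (h : Fin m → Fin l) (p : Fin m × Fin m) : ℝ :=
  if p.1 = p.2 then 0 else if h p.1 = h p.2 then 1 else 0

noncomputable def SgPair {m : ℕ} (s : Fin m → Bool) (p : Fin m × Fin m) : ℝ :=
  sgR (s p.1) * sgR (s p.2)

lemma col_dot {l m : ℕ} (h : Fin m → Fin l) (s : Fin m → Bool) (j j' : Fin m) :
    ∑ i : Fin l, semOf h s i j * semOf h s i j'
      = if h j = h j' then sgR (s j) * sgR (s j') else 0 := by
  simp only [semOf_apply, ite_mul, mul_ite, zero_mul, mul_zero]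
  rw [Finset.sum_ite_eq Finset.univ (h j')
    (fun i => if h j = i then sgR (s j) * sgR (s j') else 0)]
  simp

lemma entryM {l m r : ℕ} (h : Fin m → Fin l) (s : Fin m → Bool)
    (U : Matrix (Fin m) (Fin r) ℝ) (hU : Uᵀ * U = 1) (k k' : Fin r) :
    (∑ i, (semOf h s * U) i k * (semOf h s * U) i k') - (if k = k' then 1 else 0)
      = ∑ p : Fin m × Fin m, Epair h p * SgPair s p * (U p.1 k * U p.2 k') := by
  have hdot : (∑ i : Fin l, (semOf h s * U) i k * (semOf h s * U) i k')
      = ∑ p : Fin m × Fin m,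
          (if h p.1 = h p.2 then sgR (s p.1) * sgR (s p.2) else 0) * (U p.1 k * U p.2 k') := by
    simp only [Matrix.mul_apply]
    have expand : ∀ i : Fin l,
        (∑ j, semOf h s i j * U j k) * (∑ j', semOf h s i j' * U j' k')
          = ∑ p : Fin m × Fin m,
              (semOf h s i p.1 * semOf h s i p.2) * (U p.1 k * U p.2 k') := by
      intro i
      rw [Finset.sum_mul_sum]
      rw [Fintype.sum_prod_type]
      exact Finset.sum_congr rfl fun j _ => Finset.sum_congr rfl fun j' _ => by ring
    simp only [expand]
    rw [Finset.sum_comm]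
    refine Finset.sum_congr rfl fun p _ => ?_
    rw [← Finset.sum_mul, col_dot]
  have hid : (if k = k' then (1:ℝ) else 0)
      = ∑ p : Fin m × Fin m, (if p.1 = p.2 then U p.1 k * U p.2 k' else 0) := by
    have h1 : (if k = k' then (1:ℝ) else 0) = ∑ j, U j k * U j k' := by
      have := congrFun (congrFun hU k) k'
      rw [Matrix.mul_apply] at this
      simp only [Matrix.transpose_apply, Matrix.one_apply] at this
      exact this.symm
    rw [h1, Fintype.sum_prod_type]
    refine Finset.sum_congr rfl fun j _ => ?_
    rw [Finset.sum_ite_eq Finset.univ j (fun j' => U j k * U j' k')]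
    simp
  rw [hdot, hid, ← Finset.sum_sub_distrib]
  refine Finset.sum_congr rfl fun p _ => ?_
  by_cases hp : p.1 = p.2
  · rw [if_pos hp, if_pos (congrArg h hp), Epair, if_pos hp]
    rw [← hp, sgR_sq]
    ring
  · rw [if_neg hp, Epair, if_neg hp, SgPair, sub_zero]
    split <;> ring

lemma pair_exp {m l : ℕ} (hl : 0 < l) (p q : Fin m × Fin m) :
    ∑ ω : (Fin m → Fin l) × (Fin m → Bool),
        Epair ω.1 p * SgPair ω.2 p * (Epair ω.1 q * SgPair ω.2 q)
      = if p.1 ≠ p.2 ∧ (q = p ∨ q = p.swap) then 2^m * (l:ℝ)^(m-1) else 0 := by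
  classical
  have hsplit : ∑ ω : (Fin m → Fin l) × (Fin m → Bool),
        Epair ω.1 p * SgPair ω.2 p * (Epair ω.1 q * SgPair ω.2 q)
      = (∑ h : Fin m → Fin l, Epair h p * Epair h q)
        * (∑ s : Fin m → Bool, SgPair s p * SgPair s q) := by
    rw [Fintype.sum_prod_type, Finset.sum_mul_sum]
    refine Finset.sum_congr rfl fun h _ => Finset.sum_congr rfl fun s _ => by ring
  rw [hsplit]
  by_cases hp : p.1 = p.2
  · have : ∀ h : Fin m → Fin l, Epair h p = 0 := fun h => if_pos hp
    simp [this, hp]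
  · by_cases hq : q.1 = q.2
    · have h0 : ∀ h : Fin m → Fin l, Epair h q = 0 := fun h => if_pos hq
      have hc : ¬ (q = p ∨ q = p.swap) := by
        rintro (rfl | rfl)
        · exact hp hq
        · exact hp (hq.symm)
      simp [h0, hc]
    · have hsg : (∑ s : Fin m → Bool, SgPair s p * SgPair s q)
          = if (p.1 = q.1 ∧ p.2 = q.2) ∨ (p.1 = q.2 ∧ p.2 = q.1) then (2:ℝ)^m else 0 := by
        simp only [SgPair]
        exact sgnQuadSum p.1 p.2 q.1 q.2 hp hq
      rw [hsg]
      by_cases hmatch : (p.1 = q.1 ∧ p.2 = q.2) ∨ (p.1 = q.2 ∧ p.2 = q.1)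
      · have hqp : q = p ∨ q = p.swap := by
          rcases hmatch with ⟨h1, h2⟩ | ⟨h1, h2⟩
          · left; exact Prod.ext h1.symm h2.symm
          · right; exact Prod.ext h2.symm h1.symm
        have hEq : ∀ h : Fin m → Fin l, Epair h q = Epair h p := by
          intro h
          rcases hqp with rfl | rfl
          · rfl
          · simp only [Epair, Prod.fst_swap, Prod.snd_swap]
            rw [if_neg (fun hh => hp hh.symm), if_neg hp]
            simp [eq_comm]
        have hEE : ∀ h : Fin m → Fin l, Epair h p * Epair h q
            = if h p.1 = h p.2 then 1 else 0 := by
          intro h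
          rw [hEq h, Epair, if_neg hp]
          split <;> norm_num
        simp only [hEE]
        rw [hash_sum hl hp, if_pos hmatch,
          if_pos (show p.1 ≠ p.2 ∧ (q = p ∨ q = p.swap) from ⟨hp, hqp⟩)]
        ring
      · have hc : ¬ (q = p ∨ q = p.swap) := by
          rintro (rfl | rfl)
          · exact hmatch (Or.inl ⟨rfl, rfl⟩)
          · exact hmatch (Or.inr ⟨rfl, rfl⟩)
        rw [if_neg hmatch, mul_zero, if_neg (fun hcond => hc hcond.2)]

noncomputable def Mdev {m l r : ℕ} (U : Matrix (Fin m) (Fin r) ℝ)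
    (ω : (Fin m → Fin l) × (Fin m → Bool)) (κ : Fin r × Fin r) : ℝ :=
  (∑ i, (semOf ω.1 ω.2 * U) i κ.1 * (semOf ω.1 ω.2 * U) i κ.2)
    - (if κ.1 = κ.2 then 1 else 0)

noncomputable def Fdev {m l r : ℕ} (U : Matrix (Fin m) (Fin r) ℝ)
    (ω : (Fin m → Fin l) × (Fin m → Bool)) : ℝ :=
  ∑ κ : Fin r × Fin r, (Mdev U ω κ)^2

lemma hU_entry {m r : ℕ} {U : Matrix (Fin m) (Fin r) ℝ} (hU : Uᵀ * U = 1) (k k' : Fin r) :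
    ∑ j, U j k * U j k' = if k = k' then 1 else 0 := by
  have := congrFun (congrFun hU k) k'
  rw [Matrix.mul_apply] at this
  simp only [Matrix.transpose_apply, Matrix.one_apply] at this
  exact this

lemma exp_bound {m l r : ℕ} (hl : 0 < l)
    (U : Matrix (Fin m) (Fin r) ℝ) (hU : Uᵀ * U = 1) :
    ∑ ω : (Fin m → Fin l) × (Fin m → Bool), Fdev U ω
      ≤ 2^m * (l:ℝ)^(m-1) * ((r:ℝ)^2 + r) := by
  classical
  set c : ℝ := 2^m * (l:ℝ)^(m-1) with hc
  have hc0 : 0 ≤ c := by positivity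
  set ES : ((Fin m → Fin l) × (Fin m → Bool)) → Fin m × Fin m → ℝ :=
    fun ω p => Epair ω.1 p * SgPair ω.2 p with hES
  set ut : Fin m × Fin m → Fin r × Fin r → ℝ :=
    fun p κ => U p.1 κ.1 * U p.2 κ.2 with hut
  set V : Fin m × Fin m → Fin m × Fin m → ℝ :=
    fun p q => ∑ κ : Fin r × Fin r, ut p κ * ut q κ with hV
  -- Step 1: pointwise expansion of Fdev
  have step1 : ∀ ω, Fdev U ω
      = ∑ p : Fin m × Fin m, ∑ q : Fin m × Fin m, ES ω p * ES ω q * V p q := by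
    intro ω
    have hM : ∀ κ : Fin r × Fin r, Mdev U ω κ = ∑ p : Fin m × Fin m, ES ω p * ut p κ :=
      fun κ => entryM ω.1 ω.2 U hU κ.1 κ.2
    unfold Fdev
    calc ∑ κ : Fin r × Fin r, (Mdev U ω κ)^2
        = ∑ κ : Fin r × Fin r, ∑ p : Fin m × Fin m, ∑ q : Fin m × Fin m,
            (ES ω p * ut p κ) * (ES ω q * ut q κ) := by
          refine Finset.sum_congr rfl fun κ _ => ?_
          rw [hM κ, sq, Finset.sum_mul_sum]
      _ = ∑ p : Fin m × Fin m, ∑ κ : Fin r × Fin r, ∑ q : Fin m × Fin m,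
            (ES ω p * ut p κ) * (ES ω q * ut q κ) := Finset.sum_comm
      _ = ∑ p : Fin m × Fin m, ∑ q : Fin m × Fin m, ∑ κ : Fin r × Fin r,
            (ES ω p * ut p κ) * (ES ω q * ut q κ) :=
          Finset.sum_congr rfl fun p _ => Finset.sum_comm
      _ = ∑ p : Fin m × Fin m, ∑ q : Fin m × Fin m, ES ω p * ES ω q * V p q := by
          refine Finset.sum_congr rfl fun p _ => Finset.sum_congr rfl fun q _ => ?_
          rw [hV, Finset.mul_sum]
          exact Finset.sum_congr rfl fun κ _ => by ring
  -- Step 2: exchange with the ω-sum and apply pair_exp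
  have step2 : ∑ ω : (Fin m → Fin l) × (Fin m → Bool), Fdev U ω
      = ∑ p : Fin m × Fin m, ∑ q : Fin m × Fin m,
          (if p.1 ≠ p.2 ∧ (q = p ∨ q = p.swap) then c else 0) * V p q := by
    simp only [step1]
    rw [Finset.sum_comm]
    refine Finset.sum_congr rfl fun p _ => ?_
    rw [Finset.sum_comm]
    refine Finset.sum_congr rfl fun q _ => ?_
    rw [← Finset.sum_mul, pair_exp hl p q]
  rw [step2]
  -- Step 3: evaluate the q-sum
  have step3 : ∀ p : Fin m × Fin m,
      (∑ q : Fin m × Fin m, (if p.1 ≠ p.2 ∧ (q = p ∨ q = p.swap) then c else 0) * V p q)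
        = if p.1 = p.2 then 0 else c * V p p + c * V p p.swap := by
    intro p
    by_cases hp : p.1 = p.2
    · rw [if_pos hp]
      refine Finset.sum_eq_zero fun q _ => ?_
      rw [if_neg (by simp [hp]), zero_mul]
    · rw [if_neg hp]
      have hne : p ≠ p.swap := by
        intro hsw
        exact hp (congrArg Prod.fst hsw)
      have hrw : ∀ q : Fin m × Fin m,
          (if p.1 ≠ p.2 ∧ (q = p ∨ q = p.swap) then c else 0) * V p q
            = if q ∈ ({p, p.swap} : Finset (Fin m × Fin m)) then c * V p q else 0 := by
        intro q
        by_cases hq : q = p ∨ q = p.swap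
        · rw [if_pos ⟨hp, hq⟩, if_pos (by simp [Finset.mem_insert, hq])]
        · rw [if_neg (fun hh => hq hh.2), if_neg (by simpa [Finset.mem_insert] using hq), zero_mul]
      simp only [hrw]
      rw [Finset.sum_ite_mem, Finset.univ_inter, Finset.sum_pair hne]
  simp only [step3]
  -- Step 4: compute V p p and V p p.swap
  have hV1 : ∀ p : Fin m × Fin m,
      V p p = (∑ k, U p.1 k ^ 2) * (∑ k, U p.2 k ^ 2) := by
    intro p
    have hvv : V p p = ∑ κ : Fin r × Fin r, ut p κ * ut p κ := rfl
    rw [hvv, Fintype.sum_prod_type, Finset.sum_mul_sum]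
    refine Finset.sum_congr rfl fun k _ => Finset.sum_congr rfl fun k' _ => ?_
    simp only [hut]
    ring
  have hV2 : ∀ p : Fin m × Fin m,
      V p p.swap = (∑ k, U p.1 k * U p.2 k) ^ 2 := by
    intro p
    have hvv : V p p.swap = ∑ κ : Fin r × Fin r, ut p κ * ut p.swap κ := rfl
    rw [hvv, Fintype.sum_prod_type, sq, Finset.sum_mul_sum]
    refine Finset.sum_congr rfl fun k _ => Finset.sum_congr rfl fun k' _ => ?_
    simp only [hut, Prod.fst_swap, Prod.snd_swap]
    ring
  -- Step 5: sum the bounds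
  have hT1 : ∑ p : Fin m × Fin m, (∑ k, U p.1 k ^ 2) * (∑ k, U p.2 k ^ 2) = (r:ℝ)^2 := by
    rw [Fintype.sum_prod_type]
    dsimp only
    rw [← Finset.sum_mul_sum]
    have hdiag : ∑ j, ∑ k, U j k ^ 2 = (r:ℝ) := by
      rw [Finset.sum_comm]
      have : ∀ k : Fin r, ∑ j, U j k ^ 2 = 1 := by
        intro k
        have := hU_entry hU k k
        rw [if_pos rfl] at this
        rw [← this]
        exact Finset.sum_congr rfl fun j _ => sq (U j k) ▸ rfl
      simp only [this]
      simp
    rw [hdiag, sq]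
  have hT2 : ∑ p : Fin m × Fin m, (∑ k, U p.1 k * U p.2 k) ^ 2 = (r:ℝ) := by
    have expand : ∀ p : Fin m × Fin m, (∑ k, U p.1 k * U p.2 k) ^ 2
        = ∑ κ : Fin r × Fin r, (U p.1 κ.1 * U p.1 κ.2) * (U p.2 κ.1 * U p.2 κ.2) := by
      intro p
      rw [sq, Finset.sum_mul_sum, Fintype.sum_prod_type]
      exact Finset.sum_congr rfl fun k _ => Finset.sum_congr rfl fun k' _ => by ring
    simp only [expand]
    rw [Finset.sum_comm]
    have inner : ∀ κ : Fin r × Fin r,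
        (∑ p : Fin m × Fin m, (U p.1 κ.1 * U p.1 κ.2) * (U p.2 κ.1 * U p.2 κ.2))
          = (if κ.1 = κ.2 then (1:ℝ) else 0) ^ 2 := by
      intro κ
      rw [Fintype.sum_prod_type]
      dsimp only
      rw [← Finset.sum_mul_sum, hU_entry hU κ.1 κ.2, sq]
    simp only [inner]
    rw [Fintype.sum_prod_type]
    have : ∀ k : Fin r, ∑ k' : Fin r, (if k = k' then (1:ℝ) else 0)^2 = 1 := by
      intro k
      have : ∀ k' : Fin r, (if k = k' then (1:ℝ) else 0)^2 = if k = k' then 1 else 0 := by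
        intro k'; split <;> norm_num
      simp only [this]
      rw [Finset.sum_ite_eq Finset.univ k (fun _ => (1:ℝ))]
      simp
    simp only [this]
    simp
  calc ∑ p : Fin m × Fin m, (if p.1 = p.2 then 0 else c * V p p + c * V p p.swap)
      ≤ ∑ p : Fin m × Fin m,
          (c * ((∑ k, U p.1 k ^ 2) * (∑ k, U p.2 k ^ 2))
            + c * ((∑ k, U p.1 k * U p.2 k) ^ 2)) := by
        refine Finset.sum_le_sum fun p _ => ?_
        have h1 : 0 ≤ (∑ k, U p.1 k ^ 2) * (∑ k, U p.2 k ^ 2) :=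
          mul_nonneg (Finset.sum_nonneg fun _ _ => sq_nonneg _)
            (Finset.sum_nonneg fun _ _ => sq_nonneg _)
        have h2 : 0 ≤ (∑ k, U p.1 k * U p.2 k) ^ 2 := sq_nonneg _
        split
        · positivity
        · rw [hV1 p, hV2 p]
    _ = c * ((r:ℝ)^2 + r) := by
        rw [Finset.sum_add_distrib, ← Finset.mul_sum, ← Finset.mul_sum, hT1, hT2, mul_add]

lemma dev_to_bounds {m l r : ℕ} (ε : ℝ) (hε : 0 < ε) (hε1 : ε < 1)
    (U : Matrix (Fin m) (Fin r) ℝ) (ω : (Fin m → Fin l) × (Fin m → Bool))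
    (hF : Fdev U ω ≤ (2*ε - ε^2)^2) (x : Fin r → ℝ) :
    (1 - ε) * Real.sqrt (∑ i, x i ^ 2) ≤
        Real.sqrt (∑ i, ((semOf ω.1 ω.2 * U).mulVec x i) ^ 2) ∧
      Real.sqrt (∑ i, ((semOf ω.1 ω.2 * U).mulVec x i) ^ 2) ≤
        (1 + ε) * Real.sqrt (∑ i, x i ^ 2) := by
  classical
  set t : ℝ := 2*ε - ε^2 with ht_def
  have ht0 : 0 < t := by nlinarith
  set A := semOf ω.1 ω.2 * U with hA
  set Sx : ℝ := ∑ i, (A.mulVec x i) ^ 2 with hSx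
  set X2 : ℝ := ∑ k, x k ^ 2 with hX2
  have hSx0 : 0 ≤ Sx := Finset.sum_nonneg fun _ _ => sq_nonneg _
  have hX20 : 0 ≤ X2 := Finset.sum_nonneg fun _ _ => sq_nonneg _
  have hexp : Sx - X2 = ∑ κ : Fin r × Fin r, Mdev U ω κ * (x κ.1 * x κ.2) := by
    have e1 : Sx = ∑ κ : Fin r × Fin r,
        (∑ i, A i κ.1 * A i κ.2) * (x κ.1 * x κ.2) := by
      rw [hSx]
      have expand : ∀ i, (A.mulVec x i)^2
          = ∑ κ : Fin r × Fin r, (A i κ.1 * x κ.1) * (A i κ.2 * x κ.2) := by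
        intro i
        have : A.mulVec x i = ∑ k, A i k * x k := by
          simp [Matrix.mulVec, dotProduct]
        rw [this, sq, Finset.sum_mul_sum, Fintype.sum_prod_type]
      simp only [expand]
      rw [Finset.sum_comm]
      refine Finset.sum_congr rfl fun κ _ => ?_
      rw [Finset.sum_mul]
      exact Finset.sum_congr rfl fun i _ => by ring
    have e2 : X2 = ∑ κ : Fin r × Fin r,
        (if κ.1 = κ.2 then (1:ℝ) else 0) * (x κ.1 * x κ.2) := by
      rw [hX2, Fintype.sum_prod_type]
      dsimp only
      refine Finset.sum_congr rfl fun k _ => ?_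
      simp only [ite_mul, one_mul, zero_mul]
      rw [Finset.sum_ite_eq Finset.univ k (fun k' => x k * x k')]
      simp [sq]
    rw [e1, e2, ← Finset.sum_sub_distrib]
    refine Finset.sum_congr rfl fun κ _ => ?_
    rw [Mdev, sub_mul]
  have hCS : (Sx - X2)^2 ≤ Fdev U ω * X2^2 := by
    have h1 := Finset.sum_mul_sq_le_sq_mul_sq Finset.univ
      (fun κ : Fin r × Fin r => Mdev U ω κ) (fun κ => x κ.1 * x κ.2)
    have h2 : ∑ κ : Fin r × Fin r, (x κ.1 * x κ.2)^2 = X2^2 := by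
      rw [hX2, sq, Finset.sum_mul_sum, Fintype.sum_prod_type]
      refine Finset.sum_congr rfl fun k _ => Finset.sum_congr rfl fun k' _ => by ring
    rw [hexp]
    calc (∑ κ : Fin r × Fin r, Mdev U ω κ * (x κ.1 * x κ.2))^2
        ≤ (∑ κ : Fin r × Fin r, (Mdev U ω κ)^2) * ∑ κ : Fin r × Fin r, (x κ.1 * x κ.2)^2 := h1
      _ = Fdev U ω * X2^2 := by rw [h2]; rfl
  have hdev : |Sx - X2| ≤ t * X2 := by
    have h3 : (Sx - X2)^2 ≤ (t * X2)^2 := by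
      calc (Sx - X2)^2 ≤ Fdev U ω * X2^2 := hCS
        _ ≤ t^2 * X2^2 := by
            apply mul_le_mul_of_nonneg_right hF (sq_nonneg _)
        _ = (t * X2)^2 := by ring
    calc |Sx - X2| = Real.sqrt ((Sx - X2)^2) := (Real.sqrt_sq_eq_abs _).symm
      _ ≤ Real.sqrt ((t * X2)^2) := Real.sqrt_le_sqrt h3
      _ = t * X2 := Real.sqrt_sq (by positivity)
  have habs := abs_le.1 hdev
  have hlow : (1 - ε)^2 * X2 ≤ Sx := by nlinarith [habs.1]
  have hhigh : Sx ≤ (1 + ε)^2 * X2 := by nlinarith [habs.2, sq_nonneg ε]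
  constructor
  · calc (1-ε) * Real.sqrt X2 = Real.sqrt ((1-ε)^2 * X2) := by
          rw [Real.sqrt_mul (sq_nonneg _), Real.sqrt_sq (by linarith : (0:ℝ) ≤ 1-ε)]
      _ ≤ Real.sqrt Sx := Real.sqrt_le_sqrt hlow
  · calc Real.sqrt Sx ≤ Real.sqrt ((1+ε)^2 * X2) := Real.sqrt_le_sqrt hhigh
      _ = (1+ε) * Real.sqrt X2 := by
          rw [Real.sqrt_mul (sq_nonneg _), Real.sqrt_sq (by linarith : (0:ℝ) ≤ 1+ε)]

/-- Theorem 3 of Nelson–Nguyen (OSNAP): for `l ≥ δ⁻¹ (r² + r)/(2ε − ε²)²`, a uniformly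
random `l × m` sparse embedding matrix `S` satisfies, with probability at least `1 − δ`,
`(1 − ε)‖x‖₂ ≤ ‖S U x‖₂ ≤ (1 + ε)‖x‖₂` for all `x ∈ ℝʳ`, whenever `U` is an `m × r`
matrix with orthonormal columns; i.e. all singular values of `S U` lie in `[1−ε, 1+ε]`. -/
theorem sem_subspace_embedding {m l r : ℕ} (hm : 0 < m) (hl0 : 0 < l) (hr : 0 < r)
    (ε δ : ℝ) (hε : 0 < ε) (hε1 : ε < 1) (hδ : 0 < δ) (hδ1 : δ < 1)
    (hl : δ⁻¹ * ((r : ℝ) ^ 2 + r) / (2 * ε - ε ^ 2) ^ 2 ≤ l)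
    (U : Matrix (Fin m) (Fin r) ℝ) (hU : Uᵀ * U = 1) :
    haveI : NeZero l := ⟨hl0.ne'⟩
    ENNReal.ofReal (1 - δ) ≤
      (PMF.uniformOfFintype ((Fin m → Fin l) × (Fin m → Bool))).toMeasure
        {ω | ∀ x : Fin r → ℝ,
          (1 - ε) * Real.sqrt (∑ i, x i ^ 2) ≤
              Real.sqrt (∑ i, ((semOf ω.1 ω.2 * U).mulVec x i) ^ 2) ∧
          Real.sqrt (∑ i, ((semOf ω.1 ω.2 * U).mulVec x i) ^ 2) ≤
              (1 + ε) * Real.sqrt (∑ i, x i ^ 2)} := by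
  classical
  haveI : NeZero l := ⟨hl0.ne'⟩
  set t : ℝ := 2*ε - ε^2 with ht_def
  have ht0 : 0 < t := by nlinarith
  have ht2 : 0 < t^2 := by positivity
  set G : Set ((Fin m → Fin l) × (Fin m → Bool)) := {ω | Fdev U ω ≤ t^2} with hGdef
  have hsub : G ⊆ {ω : ((Fin m → Fin l) × (Fin m → Bool)) | ∀ x : Fin r → ℝ,
      (1 - ε) * Real.sqrt (∑ i, x i ^ 2) ≤
          Real.sqrt (∑ i, ((semOf ω.1 ω.2 * U).mulVec x i) ^ 2) ∧
        Real.sqrt (∑ i, ((semOf ω.1 ω.2 * U).mulVec x i) ^ 2) ≤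
          (1 + ε) * Real.sqrt (∑ i, x i ^ 2)} := by
    intro ω hω x
    exact dev_to_bounds ε hε hε1 U ω hω x
  refine le_trans ?_ (MeasureTheory.measure_mono hsub)
  -- Markov bound
  set Bad : Finset ((Fin m → Fin l) × (Fin m → Bool)) := Finset.univ.filter (fun ω => ¬ Fdev U ω ≤ t^2) with hBad
  have hN : (Fintype.card ((Fin m → Fin l) × (Fin m → Bool)) : ℝ) = (l:ℝ)^m * 2^m := by
    rw [Fintype.card_prod, Fintype.card_fun, Fintype.card_fun, Fintype.card_fin,
      Fintype.card_fin, Fintype.card_bool]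
    push_cast
    ring
  have hFnonneg : ∀ ω : ((Fin m → Fin l) × (Fin m → Bool)), 0 ≤ Fdev U ω :=
    fun ω => Finset.sum_nonneg fun _ _ => sq_nonneg _
  have hmark : (Bad.card : ℝ) * t^2 ≤ ∑ ω : ((Fin m → Fin l) × (Fin m → Bool)), Fdev U ω := by
    calc (Bad.card : ℝ) * t^2 = Bad.card • t^2 := by rw [nsmul_eq_mul]
      _ ≤ ∑ ω ∈ Bad, Fdev U ω := by
          apply Finset.card_nsmul_le_sum
          intro ω hω
          rw [hBad, Finset.mem_filter] at hω
          exact (lt_of_not_ge hω.2).le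
      _ ≤ ∑ ω : ((Fin m → Fin l) × (Fin m → Bool)), Fdev U ω :=
          Finset.sum_le_sum_of_subset_of_nonneg (Finset.subset_univ _)
            (fun ω _ _ => hFnonneg ω)
  have hrr : (r:ℝ)^2 + r ≤ δ * l * t^2 := by
    have hmul := mul_le_mul_of_nonneg_left hl (le_of_lt (mul_pos hδ ht2))
    have heq : δ * t^2 * (δ⁻¹ * ((r:ℝ)^2 + r) / t^2) = (r:ℝ)^2 + r := by
      field_simp
    rw [heq] at hmul
    calc (r:ℝ)^2 + r ≤ δ * t^2 * l := hmul
      _ = δ * l * t^2 := by ring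
  have hpow : (l:ℝ)^(m-1) * l = (l:ℝ)^m := by
    rw [← pow_succ]
    congr 1
    omega
  have hcard : (Bad.card : ℝ) ≤ δ * (Fintype.card ((Fin m → Fin l) × (Fin m → Bool)) : ℝ) := by
    have h5 : (2:ℝ)^m * (l:ℝ)^(m-1) * ((r:ℝ)^2 + r) ≤ δ * ((l:ℝ)^m * 2^m) * t^2 := by
      calc (2:ℝ)^m * (l:ℝ)^(m-1) * ((r:ℝ)^2 + r)
          ≤ (2:ℝ)^m * (l:ℝ)^(m-1) * (δ * l * t^2) := by
            apply mul_le_mul_of_nonneg_left hrr (by positivity)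
        _ = δ * ((l:ℝ)^(m-1) * l * 2^m) * t^2 := by ring
        _ = δ * ((l:ℝ)^m * 2^m) * t^2 := by rw [hpow]
    rw [hN]
    have := le_trans hmark (le_trans (exp_bound hl0 U hU) h5)
    exact le_of_mul_le_mul_right (by linarith) ht2
  -- measure computation
  have hGm : MeasurableSet G := MeasurableSet.of_discrete
  have hcompl : (PMF.uniformOfFintype ((Fin m → Fin l) × (Fin m → Bool))).toMeasure Gᶜ ≤ ENNReal.ofReal δ := by
    rw [PMF.toMeasure_apply_fintype]
    have hind : ∀ ω : ((Fin m → Fin l) × (Fin m → Bool)), Gᶜ.indicator (⇑(PMF.uniformOfFintype ((Fin m → Fin l) × (Fin m → Bool)))) ω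
        = if ¬ Fdev U ω ≤ t^2 then ((Fintype.card ((Fin m → Fin l) × (Fin m → Bool)) : ℝ≥0∞))⁻¹ else 0 := by
      intro ω
      rw [Set.indicator_apply]
      by_cases hω : Fdev U ω ≤ t^2
      · rw [if_neg (by simp [hGdef, hω]), if_neg (by simp [hω])]
      · rw [if_pos (by simp [hGdef, hω]), if_pos hω, PMF.uniformOfFintype_apply]
    simp only [hind]
    rw [Finset.sum_ite, Finset.sum_const, Finset.sum_const_zero, add_zero]
    have hle : ((Bad.card : ℝ≥0∞)) ≤ ENNReal.ofReal δ * (Fintype.card ((Fin m → Fin l) × (Fin m → Bool)) : ℝ≥0∞) := by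
      rw [← ENNReal.ofReal_natCast Bad.card, ← ENNReal.ofReal_natCast (Fintype.card ((Fin m → Fin l) × (Fin m → Bool))),
        ← ENNReal.ofReal_mul hδ.le]
      exact ENNReal.ofReal_le_ofReal hcard
    calc (Finset.univ.filter (fun ω : ((Fin m → Fin l) × (Fin m → Bool)) => ¬ Fdev U ω ≤ t^2)).card
          • ((Fintype.card ((Fin m → Fin l) × (Fin m → Bool)) : ℝ≥0∞))⁻¹
        = (Bad.card : ℝ≥0∞) * ((Fintype.card ((Fin m → Fin l) × (Fin m → Bool)) : ℝ≥0∞))⁻¹ := by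
          rw [hBad, nsmul_eq_mul]
      _ ≤ ENNReal.ofReal δ * (Fintype.card ((Fin m → Fin l) × (Fin m → Bool)) : ℝ≥0∞) * ((Fintype.card ((Fin m → Fin l) × (Fin m → Bool)) : ℝ≥0∞))⁻¹ :=
          mul_le_mul_left hle _
      _ = ENNReal.ofReal δ * ((Fintype.card ((Fin m → Fin l) × (Fin m → Bool)) : ℝ≥0∞) * ((Fintype.card ((Fin m → Fin l) × (Fin m → Bool)) : ℝ≥0∞))⁻¹) := by
          rw [mul_assoc]
      _ = ENNReal.ofReal δ := by
          rw [ENNReal.mul_inv_cancel (by exact_mod_cast Fintype.card_ne_zero)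
            (ENNReal.natCast_ne_top _), mul_one]
  haveI : MeasureTheory.IsProbabilityMeasure ((PMF.uniformOfFintype ((Fin m → Fin l) × (Fin m → Bool))).toMeasure) :=
    PMF.toMeasure.isProbabilityMeasure _
  have hGeq : (PMF.uniformOfFintype ((Fin m → Fin l) × (Fin m → Bool))).toMeasure G
      = 1 - (PMF.uniformOfFintype ((Fin m → Fin l) × (Fin m → Bool))).toMeasure Gᶜ := by
    have := MeasureTheory.prob_compl_eq_one_sub (μ := (PMF.uniformOfFintype ((Fin m → Fin l) × (Fin m → Bool))).toMeasure) hGm.compl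
    rw [compl_compl] at this
    exact this
  rw [hGeq]
  calc ENNReal.ofReal (1 - δ) ≤ 1 - ENNReal.ofReal δ := by
        rw [ENNReal.ofReal_sub 1 hδ.le, ENNReal.ofReal_one]
    _ ≤ 1 - (PMF.uniformOfFintype ((Fin m → Fin l) × (Fin m → Bool))).toMeasure Gᶜ := tsub_le_tsub_left hcompl 1
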